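/- Let (p_n) and (q_n) be Nörlund sequences with comparison coefficients (k_n). Define the matrix c_{m,n} = k_{m-n} P_n / Q_m for n ≤ m and c_{m,n} = 0 for n > m. Then for every sequence r, (N^q r)_m = Σ_{n=0}^∞ c_{m,n} (N^p r)_n for all m. -/

import Mathlib

theorem norlund_mean_matrix_form
    (p q k : ℕ → ℝ)
    (hp0 : 0 < p 0) (hp : ∀ n, 0 < n → 0 ≤ p n)
    (hq0 : 0 < q 0) (hq : ∀ n, 0 < n → 0 ≤ q n)
    (hk : ∀ n, q n = ∑ j ∈ Finset.range (n + 1), k j * p (n - j))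
    (P Q : ℕ → ℝ)
    (hP : ∀ n, P n = ∑ i ∈ Finset.range (n + 1), p i)
    (hQ : ∀ n, Q n = ∑ i ∈ Finset.range (n + 1), q i)
    (c : ℕ → ℕ → ℝ)
    (hc : ∀ m n, c m n = if n ≤ m then k (m - n) * P n / Q m else 0)
    (r : ℕ → ℝ) (Np Nq : ℕ → ℝ)
    (hNp : ∀ m, Np m = (∑ j ∈ Finset.range (m + 1), p (m - j) * r j) / P m)
    (hNq : ∀ m, Nq m = (∑ j ∈ Finset.range (m + 1), q (m - j) * r j) / Q m) :
    ∀ m, Nq m = ∑' n, c m n * Np n := by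
  have hPpos : ∀ n, 0 < P n := by
    intro n
    rw [hP]
    apply Finset.sum_pos'
    · intro i _
      rcases Nat.eq_zero_or_pos i with h | h
      · rw [h]; linarith
      · exact hp i h
    · exact ⟨0, by simp, hp0⟩
  have hQpos : ∀ n, 0 < Q n := by
    intro n
    rw [hQ]
    apply Finset.sum_pos'
    · intro i _
      rcases Nat.eq_zero_or_pos i with h | h
      · rw [h]; linarith
      · exact hq i h
    · exact ⟨0, by simp, hq0⟩
  intro m
  rw [tsum_eq_sum (s := Finset.range (m + 1))
      (by
        intro b hb
        rw [hc, if_neg (by simpa using hb)]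
        ring)]
  have step1 : ∀ n ∈ Finset.range (m + 1),
      c m n * Np n = k (m - n) * (∑ j ∈ Finset.range (n + 1), p (n - j) * r j) / Q m := by
    intro n hn
    rw [Finset.mem_range] at hn
    rw [hc, if_pos (by omega), hNp, div_mul_div_comm, mul_comm (Q m) (P n),
      mul_comm (k (m - n)) (P n), mul_assoc, mul_div_mul_left _ _ (hPpos n).ne']
  rw [Finset.sum_congr rfl step1, ← Finset.sum_div]
  have key : (∑ n ∈ Finset.range (m + 1),
      k (m - n) * ∑ j ∈ Finset.range (n + 1), p (n - j) * r j)
      = ∑ j ∈ Finset.range (m + 1), q (m - j) * r j := by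
    have swap : (∑ n ∈ Finset.range (m + 1),
        ∑ j ∈ Finset.range (n + 1), k (m - n) * (p (n - j) * r j))
        = ∑ j ∈ Finset.range (m + 1),
          ∑ n ∈ Finset.Ico j (m + 1), k (m - n) * (p (n - j) * r j) := by
      have h := Finset.sum_Ico_Ico_comm 0 (m + 1)
        (fun j n => k (m - n) * (p (n - j) * r j))
      simp only [Finset.range_eq_Ico]
      exact h.symm
    calc (∑ n ∈ Finset.range (m + 1),
          k (m - n) * ∑ j ∈ Finset.range (n + 1), p (n - j) * r j)
        = ∑ n ∈ Finset.range (m + 1),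
          ∑ j ∈ Finset.range (n + 1), k (m - n) * (p (n - j) * r j) := by
          simp [Finset.mul_sum]
      _ = ∑ j ∈ Finset.range (m + 1),
          ∑ n ∈ Finset.Ico j (m + 1), k (m - n) * (p (n - j) * r j) := swap
      _ = ∑ j ∈ Finset.range (m + 1), q (m - j) * r j := by
          apply Finset.sum_congr rfl
          intro j hj
          rw [Finset.mem_range] at hj
          have hjm : j ≤ m := by omega
          rw [Finset.sum_Ico_eq_sum_range]
          have hlen : m + 1 - j = (m - j) + 1 := by omega
          rw [hlen]
          have heq : ∀ i ∈ Finset.range ((m - j) + 1),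
              k (m - (j + i)) * (p ((j + i) - j) * r j)
              = k ((m - j) - i) * (p i * r j) := by
            intro i hi
            rw [Finset.mem_range] at hi
            have e1 : m - (j + i) = (m - j) - i := by omega
            have e2 : (j + i) - j = i := by omega
            rw [e1, e2]
          rw [Finset.sum_congr rfl heq, hk (m - j), Finset.sum_mul,
            ← Finset.sum_range_reflect (fun i => k ((m - j) - i) * (p i * r j)) ((m - j) + 1)]
          apply Finset.sum_congr rfl
          intro i hi
          rw [Finset.mem_range] at hi
          have h1 : (m - j) - ((m - j) + 1 - 1 - i) = i := by omega
          have h2 : (m - j) + 1 - 1 - i = (m - j) - i := by omega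
          rw [h1, h2]; ring
  rw [key, hNq]
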